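/- Let (X,d) be a metric space, μ a Borel measure on X, N > 1 a real number, and x₀ ∈ X. Assume that 0 < μ(B_{x₀}(r)) < ∞ for all r > 0, that r ↦ μ(B_{x₀}(r))/r^N is nonincreasing on (0,∞), and that μ(B_{x₀}(r))/(ω_N r^N) converges to some θ ≥ 0 as r → ∞. If C ∈ ℝ is a constant such that μ⁺(Ω) ≥ C · μ(Ω)^{(N−1)/N} holds for every bounded Borel set Ω ⊆ X with 0 < μ(Ω) < ∞, then C ≤ N · ω_N^{1/N} · θ^{1/N}. In other words, the constant N ω_N^{1/N} θ^{1/N} in the isoperimetric inequality is sharp. -/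

import Mathlib

open MeasureTheory Metric Filter Set
open scoped Topology ENNReal

/-- The constant `ω_N = π^{N/2} / Γ(1 + N/2)`. -/
noncomputable def omegaN (N : ℝ) : ℝ := Real.pi ^ (N / 2) / Real.Gamma (1 + N / 2)

/-- The `ε`-neighborhood `Ω_ε = {x : ∃ y ∈ Ω, d(x,y) < ε}`. -/
def eNbhd {X : Type*} [MetricSpace X] (Ω : Set X) (ε : ℝ) : Set X :=
  {x | ∃ y ∈ Ω, dist x y < ε}

/-- The Minkowski content `μ⁺(Ω) = liminf_{ε → 0⁺} μ(Ω_ε \ Ω)/ε`. -/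
noncomputable def minkowskiContent {X : Type*} [MetricSpace X] [MeasurableSpace X]
    (μ : Measure X) (Ω : Set X) : ℝ≥0∞ :=
  Filter.liminf (fun ε : ℝ => μ (eNbhd Ω ε \ Ω) / ENNReal.ofReal ε) (𝓝[>] (0 : ℝ))

/-- Sharpness of the isoperimetric constant: if `μ⁺(Ω) ≥ C μ(Ω)^{(N-1)/N}` holds for
all bounded Borel sets `Ω` of positive finite measure, then
`C ≤ N ω_N^{1/N} θ^{1/N}`. -/
theorem isoperimetric_constant_sharp
    {X : Type*} [MetricSpace X] [MeasurableSpace X] [BorelSpace X]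
    (μ : Measure X) (N : ℝ) (hN : 1 < N) (x₀ : X)
    (hpos : ∀ r : ℝ, 0 < r → 0 < μ (Metric.ball x₀ r))
    (hfin : ∀ r : ℝ, 0 < r → μ (Metric.ball x₀ r) < ⊤)
    (hBG : ∀ r₁ r₂ : ℝ, 0 < r₁ → r₁ ≤ r₂ →
      (μ (Metric.ball x₀ r₂)).toReal / r₂ ^ N ≤ (μ (Metric.ball x₀ r₁)).toReal / r₁ ^ N)
    (θ : ℝ) (hθ : 0 ≤ θ)
    (hAVR : Tendsto (fun r : ℝ => (μ (Metric.ball x₀ r)).toReal / (omegaN N * r ^ N))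
      atTop (𝓝 θ))
    (C : ℝ)
    (hC : ∀ Ω : Set X, Bornology.IsBounded Ω → MeasurableSet Ω →
      0 < μ Ω → μ Ω < ⊤ →
      ENNReal.ofReal C * μ Ω ^ ((N - 1) / N) ≤ minkowskiContent μ Ω) :
    C ≤ N * omegaN N ^ (1 / N) * θ ^ (1 / N) := by
  have hNpos : (0:ℝ) < N := by linarith
  have hN0 : (N:ℝ) ≠ 0 := hNpos.ne'
  have hωpos : 0 < omegaN N :=
    div_pos (Real.rpow_pos_of_pos Real.pi_pos _) (Real.Gamma_pos_of_pos (by linarith))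
  set V : ℝ → ℝ := fun s => (μ (Metric.ball x₀ s)).toReal with hVdef
  -- per-radius bound
  have key : ∀ r : ℝ, 0 < r → C ≤ N * (V r / r ^ N) ^ (1 / N) := by
    intro r hr
    have hVpos : 0 < V r := ENNReal.toReal_pos (hpos r hr).ne' (hfin r hr).ne
    have hrN : (0:ℝ) < r ^ N := Real.rpow_pos_of_pos hr N
    -- bound the Minkowski content of the ball
    have hmink : minkowskiContent μ (Metric.ball x₀ r) ≤ ENNReal.ofReal (N * V r / r) := by
      have hub : ∀ᶠ ε in 𝓝[>] (0:ℝ),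
          μ (eNbhd (Metric.ball x₀ r) ε \ Metric.ball x₀ r) / ENNReal.ofReal ε
            ≤ ENNReal.ofReal (V r / r ^ N * (((r + ε) ^ N - r ^ N) / ε)) := by
        filter_upwards [self_mem_nhdsWithin] with ε (hε : 0 < ε)
        have hrε : (0:ℝ) < r + ε := by linarith
        have hsub : eNbhd (Metric.ball x₀ r) ε ⊆ Metric.ball x₀ (r + ε) := by
          rintro x ⟨y, hy, hxy⟩
          have hy' : dist y x₀ < r := mem_ball.mp hy
          refine mem_ball.mpr ?_
          calc dist x x₀ ≤ dist x y + dist y x₀ := dist_triangle _ _ _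
            _ < ε + r := add_lt_add hxy hy'
            _ = r + ε := add_comm _ _
        have h1 : μ (eNbhd (Metric.ball x₀ r) ε \ Metric.ball x₀ r)
            ≤ ENNReal.ofReal (V (r + ε) - V r) := by
          calc μ (eNbhd (Metric.ball x₀ r) ε \ Metric.ball x₀ r)
              ≤ μ (Metric.ball x₀ (r + ε) \ Metric.ball x₀ r) :=
                measure_mono (diff_subset_diff_left hsub)
            _ = μ (Metric.ball x₀ (r + ε)) - μ (Metric.ball x₀ r) :=
                measure_diff (ball_subset_ball (by linarith))
                  measurableSet_ball.nullMeasurableSet (hfin r hr).ne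
            _ = ENNReal.ofReal (V (r + ε)) - ENNReal.ofReal (V r) := by
                rw [ENNReal.ofReal_toReal (hfin _ hrε).ne, ENNReal.ofReal_toReal (hfin r hr).ne]
            _ = ENNReal.ofReal (V (r + ε) - V r) :=
                (ENNReal.ofReal_sub _ ENNReal.toReal_nonneg).symm
        have h2 : (V (r + ε) - V r) / ε ≤ V r / r ^ N * (((r + ε) ^ N - r ^ N) / ε) := by
          have hBG' := hBG r (r + ε) hr (by linarith)
          have hVle : V (r + ε) ≤ V r / r ^ N * (r + ε) ^ N :=
            (div_le_iff₀ (Real.rpow_pos_of_pos hrε N)).mp hBG'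
          have hsub' : V (r + ε) - V r ≤ V r / r ^ N * ((r + ε) ^ N - r ^ N) := by
            have hh : V r / r ^ N * r ^ N = V r := by field_simp
            rw [mul_sub, hh]
            linarith
          rw [← mul_div_assoc]
          gcongr
        calc μ (eNbhd (Metric.ball x₀ r) ε \ Metric.ball x₀ r) / ENNReal.ofReal ε
            ≤ ENNReal.ofReal (V (r + ε) - V r) / ENNReal.ofReal ε := by gcongr
          _ = ENNReal.ofReal ((V (r + ε) - V r) / ε) := (ENNReal.ofReal_div_of_pos hε).symm
          _ ≤ ENNReal.ofReal (V r / r ^ N * (((r + ε) ^ N - r ^ N) / ε)) :=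
              ENNReal.ofReal_le_ofReal h2
      have hg : Tendsto (fun ε : ℝ =>
          ENNReal.ofReal (V r / r ^ N * (((r + ε) ^ N - r ^ N) / ε))) (𝓝[>] (0:ℝ))
          (𝓝 (ENNReal.ofReal (N * V r / r))) := by
        have hd : HasDerivAt (fun x : ℝ => x ^ N) (N * r ^ (N - 1)) r :=
          Real.hasDerivAt_rpow_const (Or.inl hr.ne')
        have hmap : Tendsto (fun ε : ℝ => r + ε) (𝓝[>] (0:ℝ)) (𝓝[≠] r) := by
          have h₁ : Tendsto (fun ε : ℝ => r + ε) (𝓝 (0:ℝ)) (𝓝 r) := by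
            simpa using (continuous_add_left r).tendsto' 0 r (by simp)
          refine tendsto_nhdsWithin_of_tendsto_nhds_of_eventually_within _
            (h₁.mono_left nhdsWithin_le_nhds) ?_
          filter_upwards [self_mem_nhdsWithin] with ε (hε : 0 < ε)
          simp only [Set.mem_compl_iff, Set.mem_singleton_iff]
          intro h
          nlinarith [congrArg id h]
        have hslope := (hasDerivAt_iff_tendsto_slope.mp hd).comp hmap
        have h2 : Tendsto (fun ε : ℝ => ((r + ε) ^ N - r ^ N) / ε) (𝓝[>] (0:ℝ))
            (𝓝 (N * r ^ (N - 1))) := by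
          refine hslope.congr fun ε => ?_
          simp [Function.comp, slope_def_field, add_sub_cancel_left]
        have h3 : Tendsto (fun ε : ℝ => V r / r ^ N * (((r + ε) ^ N - r ^ N) / ε))
            (𝓝[>] (0:ℝ)) (𝓝 (V r / r ^ N * (N * r ^ (N - 1)))) :=
          tendsto_const_nhds.mul h2
        have heq : V r / r ^ N * (N * r ^ (N - 1)) = N * V r / r := by
          rw [Real.rpow_sub hr, Real.rpow_one]
          field_simp
        rw [← heq]
        exact (ENNReal.continuous_ofReal.tendsto _).comp h3
      calc minkowskiContent μ (Metric.ball x₀ r)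
          ≤ liminf (fun ε : ℝ =>
              ENNReal.ofReal (V r / r ^ N * (((r + ε) ^ N - r ^ N) / ε))) (𝓝[>] (0:ℝ)) :=
            liminf_le_liminf hub
        _ = ENNReal.ofReal (N * V r / r) := hg.liminf_eq
    -- use the isoperimetric hypothesis on the ball
    have hCr := (hC (Metric.ball x₀ r) isBounded_ball measurableSet_ball
      (hpos r hr) (hfin r hr)).trans hmink
    have hreal : C * (V r) ^ ((N - 1) / N) ≤ N * V r / r := by
      rcases le_or_gt C 0 with hCneg | hCpos
      · have h₁ : 0 ≤ N * V r / r := by positivity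
        nlinarith [Real.rpow_pos_of_pos hVpos ((N - 1) / N)]
      · have hμ : μ (Metric.ball x₀ r) = ENNReal.ofReal (V r) :=
          (ENNReal.ofReal_toReal (hfin r hr).ne).symm
        rw [hμ, ENNReal.ofReal_rpow_of_pos hVpos, ← ENNReal.ofReal_mul hCpos.le] at hCr
        exact (ENNReal.ofReal_le_ofReal_iff (by positivity)).mp hCr
    have hexp : (0:ℝ) < (V r) ^ ((N - 1) / N) := Real.rpow_pos_of_pos hVpos _
    have hdiv : C ≤ (N * V r / r) / (V r) ^ ((N - 1) / N) := (le_div_iff₀ hexp).mpr hreal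
    have hrpow : (r ^ N) ^ ((1:ℝ) / N) = r := by
      rw [← Real.rpow_mul hr.le, mul_one_div, div_self hN0, Real.rpow_one]
    have hVpow : (V r) ^ ((1:ℝ) / N) * (V r) ^ ((N - 1) / N) = V r := by
      rw [← Real.rpow_add hVpos, ← add_div]
      norm_num
      rw [div_self hN0, Real.rpow_one]
    have hq : V r / (V r) ^ ((N - 1) / N) = (V r) ^ ((1:ℝ) / N) := by
      rw [div_eq_iff hexp.ne']
      exact hVpow.symm
    have hfinal : (N * V r / r) / (V r) ^ ((N - 1) / N) = N * (V r / r ^ N) ^ ((1:ℝ) / N) := by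
      rw [Real.div_rpow hVpos.le hrN.le, hrpow]
      have hh : N * V r / r / V r ^ ((N - 1) / N)
          = N * (V r / V r ^ ((N - 1) / N)) / r := by ring
      rw [hh, hq, mul_div_assoc]
    calc C ≤ (N * V r / r) / (V r) ^ ((N - 1) / N) := hdiv
      _ = N * (V r / r ^ N) ^ ((1:ℝ) / N) := hfinal
  -- pass to the limit r → ∞
  have hlim : Tendsto (fun r : ℝ => V r / r ^ N) atTop (𝓝 (omegaN N * θ)) := by
    have h := hAVR.mul_const (omegaN N)
    have heq : (fun r : ℝ => V r / (omegaN N * r ^ N) * omegaN N) = fun r : ℝ => V r / r ^ N := by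
      funext r
      rw [mul_comm (omegaN N) (r ^ N), ← div_div, div_mul_cancel₀ _ hωpos.ne']
    rw [heq] at h
    simpa [mul_comm] using h
  have hcont : ContinuousAt (fun t : ℝ => N * t ^ ((1:ℝ) / N)) (omegaN N * θ) :=
    continuousAt_const.mul (Real.continuousAt_rpow_const _ _ (Or.inr (by positivity)))
  have htend : Tendsto (fun r : ℝ => N * (V r / r ^ N) ^ ((1:ℝ) / N)) atTop
      (𝓝 (N * (omegaN N * θ) ^ ((1:ℝ) / N))) := hcont.tendsto.comp hlim
  have : C ≤ N * (omegaN N * θ) ^ ((1:ℝ) / N) := by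
    refine ge_of_tendsto htend ?_
    filter_upwards [eventually_gt_atTop (0:ℝ)] with r hr using key r hr
  calc C ≤ N * (omegaN N * θ) ^ ((1:ℝ) / N) := this
    _ = N * omegaN N ^ (1 / N) * θ ^ (1 / N) := by
      rw [Real.mul_rpow hωpos.le hθ, mul_assoc]
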